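/- Let r > 0 and let P be the uniform distribution on the circle {(x₁,x₂) ∈ ℝ² : x₁² + x₂² = r²}, and let V_n(P) denote the n-th (unconstrained, unconditional) quantization error for P. Then the quantization coefficient for P exists as a finite positive number and equals π²r²/3, i.e., lim_{n→∞} n²·V_n(P) = π²r²/3. -/

import Mathlib

open MeasureTheory Set Filter

/-- The uniform distribution on the circle of radius `r` centered at the origin:
the pushforward of the normalized Lebesgue measure on `[0, 2π)` under
`θ ↦ (r cos θ, r sin θ)`. -/
noncomputable def uniformCircle (r : ℝ) : Measure (ℝ × ℝ) :=
  Measure.map (fun θ : ℝ => (r * Real.cos θ, r * Real.sin θ))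
    ((ENNReal.ofReal (2 * Real.pi))⁻¹ • volume.restrict (Set.Ico 0 (2 * Real.pi)))

/-- The squared Euclidean distance on `ℝ²`. -/
noncomputable def sqDist (p q : ℝ × ℝ) : ℝ := (p.1 - q.1) ^ 2 + (p.2 - q.2) ^ 2

/-- The distortion error of a set `s` of points for the measure `P` on `ℝ²`. -/
noncomputable def distortion2 (P : Measure (ℝ × ℝ)) (s : Set (ℝ × ℝ)) : ℝ :=
  ∫ x, sInf (sqDist x '' s) ∂P

/-- The `n`-th (unconstrained, unconditional) quantization error for `P` on `ℝ²`. -/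
noncomputable def quantError2 (P : Measure (ℝ × ℝ)) (n : ℕ) : ℝ :=
  sInf { v : ℝ | ∃ α : Set (ℝ × ℝ),
    α.Nonempty ∧ α.Finite ∧ α.ncard ≤ n ∧ v = distortion2 P α }


noncomputable def circ (r θ : ℝ) : ℝ × ℝ := (r * Real.cos θ, r * Real.sin θ)

lemma continuous_sqDist (a : ℝ × ℝ) : Continuous (fun x => sqDist x a) := by
  unfold sqDist; fun_prop

lemma sqDist_nonneg (p q : ℝ × ℝ) : 0 ≤ sqDist p q := by unfold sqDist; positivity

lemma sInf_sqDist_eq (x : ℝ × ℝ) {α : Set (ℝ × ℝ)} (hfin : α.Finite) (hne : α.Nonempty) :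
    sInf (sqDist x '' α) = hfin.toFinset.inf' (by simpa using hne) (sqDist x) := by
  rw [Finset.inf'_eq_csInf_image, hfin.coe_toFinset]

lemma continuous_sqDist_inf {α : Set (ℝ × ℝ)} (hfin : α.Finite) (hne : α.Nonempty) :
    Continuous (fun x => sInf (sqDist x '' α)) := by
  simp only [sInf_sqDist_eq _ hfin hne]
  rw [continuous_iff_continuousAt]
  intro x
  exact Filter.Tendsto.finset_inf'_nhds_apply _
    (fun a _ => (continuous_sqDist a).continuousAt)

lemma continuous_circ (r : ℝ) : Continuous (circ r) := by unfold circ; fun_prop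

lemma distortion2_eq (r : ℝ) {α : Set (ℝ × ℝ)} (hfin : α.Finite) (hne : α.Nonempty) :
    distortion2 (uniformCircle r) α
      = (2 * Real.pi)⁻¹ * ∫ θ in Set.Ico (0:ℝ) (2 * Real.pi), sInf (sqDist (circ r θ) '' α) := by
  have hc : Continuous (fun x => sInf (sqDist x '' α)) := continuous_sqDist_inf hfin hne
  unfold distortion2 uniformCircle
  rw [MeasureTheory.integral_map (by fun_prop) hc.aestronglyMeasurable,
    MeasureTheory.integral_smul_measure]
  rw [ENNReal.toReal_inv, ENNReal.toReal_ofReal (by positivity)]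
  simp [circ, smul_eq_mul]

lemma chord (r θ φ : ℝ) : sqDist (circ r θ) (circ r φ) = 2*r^2*(1 - Real.cos (θ - φ)) := by
  unfold sqDist circ
  simp only [Real.cos_sub]
  nlinarith [Real.sin_sq_add_cos_sq θ, Real.sin_sq_add_cos_sq φ]

lemma integral_chord (r a b φ : ℝ) :
    ∫ θ in a..b, 2*r^2*(1 - Real.cos (θ - φ))
      = 2*r^2*((b-a) - (Real.sin (b-φ) - Real.sin (a-φ))) := by
  rw [intervalIntegral.integral_const_mul]
  rw [intervalIntegral.integral_sub intervalIntegrable_const ((by fun_prop : Continuous fun θ : ℝ => Real.cos (θ - φ)).intervalIntegrable a b)]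
  rw [intervalIntegral.integral_comp_sub_right (fun x => Real.cos x) φ, integral_cos]
  simp [mul_comm]

lemma sInf_le_sqDist {x a : ℝ × ℝ} {α : Set (ℝ × ℝ)} (ha : a ∈ α) :
    sInf (sqDist x '' α) ≤ sqDist x a := by
  refine csInf_le ⟨0, ?_⟩ ⟨a, ha, rfl⟩
  rintro _ ⟨b, -, rfl⟩
  unfold sqDist; positivity

lemma distortion2_nonneg (P : Measure (ℝ × ℝ)) (α : Set (ℝ × ℝ)) : 0 ≤ distortion2 P α := by
  refine integral_nonneg fun x => Real.sInf_nonneg ?_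
  rintro _ ⟨b, -, rfl⟩
  unfold sqDist; positivity

lemma quantError2_bddBelow (P : Measure (ℝ × ℝ)) (n : ℕ) :
    BddBelow { v : ℝ | ∃ α : Set (ℝ × ℝ),
      α.Nonempty ∧ α.Finite ∧ α.ncard ≤ n ∧ v = distortion2 P α } := by
  refine ⟨0, ?_⟩
  rintro v ⟨α, -, -, -, rfl⟩
  exact distortion2_nonneg P α

lemma upper_bound (r : ℝ) (n : ℕ) (hn : 1 ≤ n) :
    quantError2 (uniformCircle r) n
      ≤ (2*Real.pi)⁻¹ * (2*r^2*(2*Real.pi - 2*n*Real.sin (Real.pi/n))) := by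
  have hπ := Real.pi_pos
  have hn0 : (0:ℝ) < n := by exact_mod_cast hn
  set s : Finset (ℝ × ℝ) := (Finset.range n).image (fun k : ℕ => circ r ((2*k+1)*Real.pi/n))
    with hs
  have hsne : s.Nonempty := Finset.Nonempty.image ⟨0, Finset.mem_range.2 (by omega)⟩ _
  have hα : (↑s : Set (ℝ × ℝ)).Nonempty ∧ (↑s : Set (ℝ × ℝ)).Finite ∧
      (↑s : Set (ℝ × ℝ)).ncard ≤ n := by
    refine ⟨by exact_mod_cast hsne, s.finite_toSet, ?_⟩
    rw [Set.ncard_coe_finset]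
    exact le_trans (Finset.card_image_le) (by simp)
  refine le_trans (csInf_le (quantError2_bddBelow _ n) ⟨↑s, hα.1, hα.2.1, hα.2.2, rfl⟩) ?_
  rw [distortion2_eq r s.finite_toSet hα.1]
  have key : (∫ θ in Set.Ico (0:ℝ) (2*Real.pi), sInf (sqDist (circ r θ) '' ↑s))
      ≤ 2*r^2*(2*Real.pi - 2*n*Real.sin (Real.pi/n)) := by
    have hFc : Continuous (fun θ => sInf (sqDist (circ r θ) '' ↑s)) :=
      (continuous_sqDist_inf s.finite_toSet hα.1).comp (continuous_circ r)
    set a : ℕ → ℝ := fun k => 2*Real.pi*k/n with ha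
    have ha0 : a 0 = 0 := by simp [ha]
    have han : a n = 2*Real.pi := by
      simp only [ha]; field_simp
    have hIoo : (∫ θ in Set.Ico (0:ℝ) (2*Real.pi), sInf (sqDist (circ r θ) '' ↑s))
        = ∫ θ in (a 0)..(a n), sInf (sqDist (circ r θ) '' ↑s) := by
      rw [ha0, han, intervalIntegral.integral_of_le (by positivity),
        MeasureTheory.integral_Ico_eq_integral_Ioo, MeasureTheory.integral_Ioc_eq_integral_Ioo]
    rw [hIoo, ← intervalIntegral.sum_integral_adjacent_intervals
      (fun k _ => (hFc.intervalIntegrable _ _))]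
    have step : ∀ k, k < n → (∫ θ in (a k)..(a (k+1)), sInf (sqDist (circ r θ) '' ↑s))
        ≤ 2*r^2*(2*Real.pi/n - 2*Real.sin (Real.pi/n)) := by
      intro k hk
      have hmem : circ r ((2*k+1)*Real.pi/n) ∈ (↑s : Set (ℝ × ℝ)) := by
        simp only [hs, Finset.coe_image, Finset.coe_range]
        exact ⟨k, by simpa using hk, rfl⟩
      have hle : ∀ θ ∈ Set.Icc (a k) (a (k+1)),
          sInf (sqDist (circ r θ) '' ↑s) ≤ 2*r^2*(1 - Real.cos (θ - (2*k+1)*Real.pi/n)) := by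
        intro θ _
        rw [← chord r θ ((2*k+1)*Real.pi/n)]
        exact sInf_le_sqDist hmem
      have hab : a k ≤ a (k+1) := by
        simp only [ha]
        push_cast
        rw [div_le_div_iff₀ hn0 hn0]
        nlinarith
      calc (∫ θ in (a k)..(a (k+1)), sInf (sqDist (circ r θ) '' ↑s))
          ≤ ∫ θ in (a k)..(a (k+1)), 2*r^2*(1 - Real.cos (θ - (2*k+1)*Real.pi/n)) := by
            refine intervalIntegral.integral_mono_on hab (hFc.intervalIntegrable _ _)
              ((by fun_prop : Continuous fun θ : ℝ =>
                2*r^2*(1 - Real.cos (θ - (2*k+1)*Real.pi/n))).intervalIntegrable _ _) hle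
        _ = 2*r^2*(2*Real.pi/n - 2*Real.sin (Real.pi/n)) := by
            rw [integral_chord]
            have e1 : a (k+1) - (2*k+1)*Real.pi/n = Real.pi/n := by
              simp only [ha]; push_cast; field_simp; ring
            have e2 : a k - (2*k+1)*Real.pi/n = -(Real.pi/n) := by
              simp only [ha]; push_cast; field_simp; ring
            have e3 : a (k+1) - a k = 2*Real.pi/n := by
              simp only [ha]; push_cast; field_simp; ring
            rw [e1, e2, e3, Real.sin_neg]
            ring
    calc (∑ k ∈ Finset.range n, ∫ θ in (a k)..(a (k+1)), sInf (sqDist (circ r θ) '' ↑s))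
        ≤ ∑ k ∈ Finset.range n, 2*r^2*(2*Real.pi/n - 2*Real.sin (Real.pi/n)) :=
          Finset.sum_le_sum (fun k hk => step k (Finset.mem_range.1 hk))
      _ = 2*r^2*(2*Real.pi - 2*n*Real.sin (Real.pi/n)) := by
          rw [Finset.sum_const, Finset.card_range, nsmul_eq_mul]
          have hnne : (n:ℝ) ≠ 0 := ne_of_gt hn0
          field_simp
  have h2 : (0:ℝ) ≤ (2*Real.pi)⁻¹ := by positivity
  exact mul_le_mul_of_nonneg_left key h2

/-- circular distance between two angles (valid when `|θ - φ| ≤ 2π`). -/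
noncomputable def cdist (θ φ : ℝ) : ℝ := min |θ - φ| (2 * Real.pi - |θ - φ|)

/-- clamped squared sine. -/
noncomputable def gg (u : ℝ) : ℝ := Real.sin (min (max u 0) (Real.pi / 2)) ^ 2

lemma continuous_gg : Continuous gg := by unfold gg; fun_prop

lemma continuous_cdist (φ : ℝ) : Continuous (fun θ => cdist θ φ) := by unfold cdist; fun_prop

lemma gg_mono : Monotone gg := by
  intro x y hxy
  unfold gg
  have h1 : min (max x 0) (Real.pi / 2) ≤ min (max y 0) (Real.pi / 2) := by
    exact min_le_min (max_le_max hxy le_rfl) le_rfl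
  have h2 : (0:ℝ) ≤ min (max x 0) (Real.pi / 2) :=
    le_min (le_max_right _ _) (by positivity)
  have h3 : min (max y 0) (Real.pi / 2) ≤ Real.pi / 2 := min_le_right _ _
  have hs : Real.sin (min (max x 0) (Real.pi / 2)) ≤ Real.sin (min (max y 0) (Real.pi / 2)) :=
    Real.sin_le_sin_of_le_of_le_pi_div_two (by linarith [Real.pi_pos]) h3 h1
  have h4 : min (max x 0) (Real.pi / 2) ≤ Real.pi :=
    le_trans (min_le_right _ _) (by linarith [Real.pi_pos])
  have hs0 : 0 ≤ Real.sin (min (max x 0) (Real.pi / 2)) :=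
    Real.sin_nonneg_of_nonneg_of_le_pi h2 h4
  exact pow_le_pow_left₀ hs0 hs 2

lemma gg_le_one (u : ℝ) : gg u ≤ 1 := Real.sin_sq_le_one _

lemma gg_nonneg (u : ℝ) : 0 ≤ gg u := sq_nonneg _

lemma sqDist_polar (r s θ φ : ℝ) :
    sqDist (circ r θ) (s * Real.cos φ, s * Real.sin φ)
      = r^2 + s^2 - 2*r*s*Real.cos (θ - φ) := by
  unfold sqDist circ
  simp only [Real.cos_sub]
  nlinarith [Real.sin_sq_add_cos_sq θ, Real.sin_sq_add_cos_sq φ]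

lemma cdist_nonneg {θ φ : ℝ} (h : |θ - φ| ≤ 2 * Real.pi) : 0 ≤ cdist θ φ :=
  le_min (abs_nonneg _) (by linarith)

lemma cdist_le_pi (θ φ : ℝ) : cdist θ φ ≤ Real.pi := by
  unfold cdist
  rcases le_total |θ - φ| Real.pi with h | h
  · exact le_trans (min_le_left _ _) h
  · exact le_trans (min_le_right _ _) (by linarith)

lemma cos_cdist (θ φ : ℝ) : Real.cos (cdist θ φ) = Real.cos (θ - φ) := by
  unfold cdist
  rcases min_cases |θ - φ| (2 * Real.pi - |θ - φ|) with ⟨h, _⟩ | ⟨h, _⟩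
  · rw [h, Real.cos_abs]
  · rw [h]
    have : 2 * Real.pi - |θ - φ| = 2 * Real.pi - |θ - φ| := rfl
    rw [Real.cos_two_pi_sub, Real.cos_abs]

lemma key_ineq {r s : ℝ} (hr : 0 ≤ r) (hs : 0 ≤ s) {θ φ : ℝ} (h : |θ - φ| ≤ 2 * Real.pi) :
    r^2 * gg (cdist θ φ) ≤ sqDist (circ r θ) (s * Real.cos φ, s * Real.sin φ) := by
  rw [sqDist_polar, ← cos_cdist θ φ]
  set δ := cdist θ φ with hδ
  have hδ0 : 0 ≤ δ := cdist_nonneg h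
  have hδπ : δ ≤ Real.pi := cdist_le_pi θ φ
  rcases le_or_gt δ (Real.pi / 2) with hc | hc
  · have : gg δ = Real.sin δ ^ 2 := by
      unfold gg
      rw [max_eq_left hδ0, min_eq_left hc]
    rw [this]
    nlinarith [sq_nonneg (r * Real.cos δ - s), Real.sin_sq_add_cos_sq δ]
  · have : gg δ = 1 := by
      unfold gg
      rw [max_eq_left hδ0, min_eq_right hc.le, Real.sin_pi_div_two, one_pow]
    rw [this]
    have hcos : Real.cos δ ≤ 0 :=
      Real.cos_nonpos_of_pi_div_two_le_of_le hc.le (by linarith [Real.pi_pos])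
    nlinarith [mul_nonneg hr hs]

/-- the angle of a point, in `[0, 2π)`. -/
noncomputable def angOf (a : ℝ × ℝ) : ℝ :=
  if Complex.arg ⟨a.1, a.2⟩ < 0 then Complex.arg ⟨a.1, a.2⟩ + 2 * Real.pi
  else Complex.arg ⟨a.1, a.2⟩

lemma angOf_mem (a : ℝ × ℝ) : angOf a ∈ Set.Ico 0 (2 * Real.pi) := by
  unfold angOf
  have h1 := Complex.neg_pi_lt_arg (⟨a.1, a.2⟩ : ℂ)
  have h2 := Complex.arg_le_pi (⟨a.1, a.2⟩ : ℂ)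
  have hπ := Real.pi_pos
  split_ifs with h
  · constructor <;> [linarith; linarith]
  · push_neg at h
    constructor <;> [linarith; linarith]

lemma angOf_spec (a : ℝ × ℝ) :
    a = (Real.sqrt (a.1^2 + a.2^2) * Real.cos (angOf a),
         Real.sqrt (a.1^2 + a.2^2) * Real.sin (angOf a)) := by
  by_cases h0 : a = 0
  · subst h0; simp; rfl
  · have hz : (⟨a.1, a.2⟩ : ℂ) ≠ 0 := by
      simp only [ne_eq, Complex.ext_iff, Complex.zero_re, Complex.zero_im]
      intro hh
      exact h0 (Prod.ext hh.1 hh.2)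
    have habs : ‖(⟨a.1, a.2⟩ : ℂ)‖ = Real.sqrt (a.1^2 + a.2^2) := by
      rw [Complex.norm_def, Complex.normSq_mk]
      ring_nf
    have habs0 : ‖(⟨a.1, a.2⟩ : ℂ)‖ ≠ 0 := by
      exact norm_ne_zero_iff.mpr hz
    have hcos : Real.cos (angOf a) = a.1 / ‖(⟨a.1, a.2⟩ : ℂ)‖ := by
      unfold angOf
      split_ifs with h
      · rw [Real.cos_add_two_pi, Complex.cos_arg hz]
      · rw [Complex.cos_arg hz]
    have hsin : Real.sin (angOf a) = a.2 / ‖(⟨a.1, a.2⟩ : ℂ)‖ := by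
      unfold angOf
      split_ifs with h
      · rw [Real.sin_add_two_pi, Complex.sin_arg]
      · rw [Complex.sin_arg]
    rw [← habs, hcos, hsin]
    field_simp

lemma F_ge {r : ℝ} (hr : 0 ≤ r) {α : Set (ℝ × ℝ)} (hfin : α.Finite) (hne : α.Nonempty)
    {θ : ℝ} (hθ : θ ∈ Set.Ico 0 (2 * Real.pi)) :
    r^2 * gg (hfin.toFinset.inf' (by simpa using hne) (fun a => cdist θ (angOf a)))
      ≤ sInf (sqDist (circ r θ) '' α) := by
  rw [sInf_sqDist_eq _ hfin hne]
  refine Finset.le_inf' _ _ ?_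
  intro a ha
  have h1 : hfin.toFinset.inf' (by simpa using hne) (fun a => cdist θ (angOf a))
      ≤ cdist θ (angOf a) := Finset.inf'_le _ ha
  have h2 : r^2 * gg (hfin.toFinset.inf' (by simpa using hne) (fun a => cdist θ (angOf a)))
      ≤ r^2 * gg (cdist θ (angOf a)) :=
    mul_le_mul_of_nonneg_left (gg_mono h1) (by positivity)
  refine le_trans h2 ?_
  have hang := angOf_mem a
  have habs : |θ - angOf a| ≤ 2 * Real.pi := by
    rw [abs_le]
    have h3 := hang.1; have h4 := hang.2; have h5 := hθ.1; have h6 := hθ.2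
    constructor <;> linarith
  calc r^2 * gg (cdist θ (angOf a))
      ≤ sqDist (circ r θ) (Real.sqrt (a.1^2+a.2^2) * Real.cos (angOf a),
          Real.sqrt (a.1^2+a.2^2) * Real.sin (angOf a)) :=
        key_ineq hr (Real.sqrt_nonneg (a.1^2 + a.2^2)) habs
    _ = sqDist (circ r θ) a := by rw [← angOf_spec a]

lemma measure_cdist_le {φ t : ℝ} (hφ : φ ∈ Set.Ico 0 (2 * Real.pi)) (ht0 : 0 ≤ t)
    (htπ : t ≤ Real.pi) :
    volume ({θ | cdist θ φ ≤ t} ∩ Set.Ico 0 (2 * Real.pi)) ≤ ENNReal.ofReal (2 * t) := by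
  have hπ := Real.pi_pos
  set A1 := Set.Icc (max (φ - t) 0) (min (φ + t) (2 * Real.pi)) with hA1
  set A2 := Set.Icc (0:ℝ) (φ + t - 2 * Real.pi) with hA2
  set A3 := Set.Icc (φ + 2 * Real.pi - t) (2 * Real.pi) with hA3
  have hsub : {θ | cdist θ φ ≤ t} ∩ Set.Ico 0 (2 * Real.pi) ⊆ A1 ∪ A2 ∪ A3 := by
    rintro θ ⟨hc, hθ0, hθ2⟩
    simp only [Set.mem_setOf_eq, cdist] at hc
    rcases min_le_iff.1 hc with h | h
    · left; left
      rw [abs_le] at h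
      exact ⟨max_le (by linarith [h.1]) hθ0, le_min (by linarith [h.2]) hθ2.le⟩
    · rcases abs_cases (θ - φ) with ⟨he, _⟩ | ⟨he, _⟩ <;> rw [he] at h
      · exact Or.inr ⟨by linarith, hθ2.le⟩
      · exact Or.inl (Or.inr ⟨hθ0, by linarith⟩)
  calc volume ({θ | cdist θ φ ≤ t} ∩ Set.Ico 0 (2 * Real.pi))
      ≤ volume (A1 ∪ A2 ∪ A3) := measure_mono hsub
    _ ≤ volume A1 + volume A2 + volume A3 :=
        le_trans (measure_union_le _ _) (by gcongr; exact measure_union_le _ _)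
    _ ≤ ENNReal.ofReal (2 * t) := by
        rw [hA1, hA2, hA3, Real.volume_Icc, Real.volume_Icc, Real.volume_Icc]
        have e1 : ENNReal.ofReal (min (φ + t) (2 * Real.pi) - max (φ - t) 0)
            + ENNReal.ofReal (φ + t - 2 * Real.pi - 0)
            + ENNReal.ofReal (2 * Real.pi - (φ + 2 * Real.pi - t))
            ≤ ENNReal.ofReal (max (min (φ + t) (2 * Real.pi) - max (φ - t) 0) 0)
            + ENNReal.ofReal (max (φ + t - 2 * Real.pi - 0) 0)
            + ENNReal.ofReal (max (2 * Real.pi - (φ + 2 * Real.pi - t)) 0) := by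
          gcongr <;> exact le_max_left _ _
        refine le_trans e1 ?_
        rw [← ENNReal.ofReal_add (le_max_right _ _) (le_max_right _ _),
          ← ENNReal.ofReal_add (add_nonneg (le_max_right _ _) (le_max_right _ _))
            (le_max_right _ _)]
        refine ENNReal.ofReal_le_ofReal ?_
        have h1 := hφ.1; have h2 := hφ.2
        rcases le_total (φ + t) (2 * Real.pi) with hA | hA <;>
          rcases le_total (φ - t) 0 with hB | hB <;>
          simp only [max_def, min_def] <;> split_ifs <;> linarith

lemma measure_M_le {α : Set (ℝ × ℝ)} (hfin : α.Finite) (hne : α.Nonempty) {n : ℕ}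
    (hcard : α.ncard ≤ n) {t : ℝ} (ht0 : 0 ≤ t) (htπ : t ≤ Real.pi) :
    volume ({θ | hfin.toFinset.inf' (by simpa using hne) (fun a => cdist θ (angOf a)) ≤ t}
      ∩ Set.Ico 0 (2 * Real.pi)) ≤ (n : ENNReal) * ENNReal.ofReal (2 * t) := by
  have hsub : {θ | hfin.toFinset.inf' (by simpa using hne) (fun a => cdist θ (angOf a)) ≤ t}
      ∩ Set.Ico 0 (2 * Real.pi)
      ⊆ ⋃ a ∈ hfin.toFinset, ({θ | cdist θ (angOf a) ≤ t} ∩ Set.Ico 0 (2 * Real.pi)) := by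
    rintro θ ⟨hθ1, hθ2⟩
    rw [Set.mem_setOf_eq, Finset.inf'_le_iff] at hθ1
    obtain ⟨a, ha, hle⟩ := hθ1
    exact Set.mem_biUnion ha ⟨hle, hθ2⟩
  calc volume _ ≤ volume (⋃ a ∈ hfin.toFinset,
        ({θ | cdist θ (angOf a) ≤ t} ∩ Set.Ico 0 (2 * Real.pi))) := measure_mono hsub
    _ ≤ ∑ a ∈ hfin.toFinset, volume ({θ | cdist θ (angOf a) ≤ t} ∩ Set.Ico 0 (2 * Real.pi)) :=
        measure_biUnion_finset_le _ _
    _ ≤ ∑ _a ∈ hfin.toFinset, ENNReal.ofReal (2 * t) :=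
        Finset.sum_le_sum fun a _ => measure_cdist_le (angOf_mem a) ht0 htπ
    _ = (hfin.toFinset.card : ENNReal) * ENNReal.ofReal (2 * t) := by
        rw [Finset.sum_const, nsmul_eq_mul]
    _ ≤ (n : ENNReal) * ENNReal.ofReal (2 * t) := by
        refine mul_le_mul_of_nonneg_right ?_ (by positivity)
        have : hfin.toFinset.card = α.ncard := (Set.ncard_eq_toFinset_card α hfin).symm
        rw [this]
        exact_mod_cast hcard


lemma integral_sin_sq_Ico {m : ℝ} (hm : 0 ≤ m) :
    ∫ t in Set.Ico (0:ℝ) m, Real.sin (2*t) = Real.sin m ^ 2 := by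
  rw [MeasureTheory.integral_Ico_eq_integral_Ioo, ← MeasureTheory.integral_Ioc_eq_integral_Ioo,
    ← intervalIntegral.integral_of_le hm]
  rw [intervalIntegral.integral_comp_mul_left (fun x => Real.sin x) two_ne_zero]
  simp only [integral_sin, mul_zero]
  rw [Real.sin_sq_eq_half_sub]
  simp
  ring

lemma integral_weight (n : ℕ) (hn : 1 ≤ n) :
    ∫ t in Set.Ico (0:ℝ) (Real.pi/n), Real.sin (2*t) * (2*Real.pi - 2*n*t)
      = Real.pi - (n/2) * Real.sin (2*Real.pi/n) := by
  have hn0 : (0:ℝ) < n := by exact_mod_cast hn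
  have hπ := Real.pi_pos
  set F : ℝ → ℝ := fun t => -Real.pi * Real.cos (2*t) + n * (t * Real.cos (2*t))
    - (n/2) * Real.sin (2*t) with hF
  have hder : ∀ t ∈ Set.uIcc (0:ℝ) (Real.pi/n),
      HasDerivAt F (Real.sin (2*t) * (2*Real.pi - 2*n*t)) t := by
    intro t _
    have h2t : HasDerivAt (fun t : ℝ => 2*t) 2 t := by
      simpa using (hasDerivAt_id t).const_mul 2
    have hcos : HasDerivAt (fun t : ℝ => Real.cos (2*t)) (-Real.sin (2*t) * 2) t :=
      (Real.hasDerivAt_cos (2*t)).comp t h2t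
    have hsin : HasDerivAt (fun t : ℝ => Real.sin (2*t)) (Real.cos (2*t) * 2) t :=
      (Real.hasDerivAt_sin (2*t)).comp t h2t
    have h1 : HasDerivAt (fun t : ℝ => t * Real.cos (2*t))
        (1 * Real.cos (2*t) + t * (-Real.sin (2*t) * 2)) t := (hasDerivAt_id t).mul hcos
    have := ((hcos.const_mul (-Real.pi)).add (h1.const_mul (n:ℝ))).sub
      (hsin.const_mul ((n:ℝ)/2))
    exact this.congr_deriv (by ring)
  have hle : (0:ℝ) ≤ Real.pi/n := by positivity
  have hcont : Continuous fun t : ℝ => Real.sin (2*t) * (2*Real.pi - 2*n*t) := by fun_prop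
  rw [MeasureTheory.integral_Ico_eq_integral_Ioo, ← MeasureTheory.integral_Ioc_eq_integral_Ioo,
    ← intervalIntegral.integral_of_le hle]
  rw [intervalIntegral.integral_eq_sub_of_hasDerivAt hder (hcont.intervalIntegrable _ _)]
  simp only [hF]
  have : 2 * (Real.pi / n) = 2 * Real.pi / n := by ring
  rw [this]
  have hc : (n:ℝ) * (Real.pi / n * Real.cos (2 * Real.pi / n)) = Real.pi * Real.cos (2*Real.pi/n) := by
    field_simp
  rw [hc]
  simp
  ring

lemma gg_ge_sin_sq_min {m τ : ℝ} (hm : 0 ≤ m) (hτ0 : 0 ≤ τ) (hτ : τ ≤ Real.pi/2) :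
    Real.sin (min m τ) ^ 2 ≤ gg m := by
  unfold gg
  have hx0 : 0 ≤ min m τ := le_min hm hτ0
  have hxy : min m τ ≤ min (max m 0) (Real.pi/2) := min_le_min (le_max_left _ _) hτ
  have hy2 : min (max m 0) (Real.pi/2) ≤ Real.pi/2 := min_le_right _ _
  have hπ := Real.pi_pos
  have hs : Real.sin (min m τ) ≤ Real.sin (min (max m 0) (Real.pi/2)) :=
    Real.sin_le_sin_of_le_of_le_pi_div_two (by linarith) hy2 hxy
  have hs0 : 0 ≤ Real.sin (min m τ) :=
    Real.sin_nonneg_of_nonneg_of_le_pi hx0 (by linarith)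
  exact pow_le_pow_left₀ hs0 hs 2

lemma inner_eq {m τ : ℝ} (hm : 0 ≤ m) (hτ : 0 ≤ τ) :
    (∫ t in Set.Ico (0:ℝ) τ, (if t < m then Real.sin (2*t) else 0))
      = Real.sin (min m τ) ^ 2 := by
  have h1 : (∫ t in Set.Ico (0:ℝ) τ, (if t < m then Real.sin (2*t) else 0))
      = ∫ t in Set.Ico (0:ℝ) τ,
          (Set.Ico (0:ℝ) (min m τ)).indicator (fun t => Real.sin (2*t)) t := by
    refine MeasureTheory.setIntegral_congr_fun measurableSet_Ico (fun t ht => ?_)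
    by_cases h : t < m
    · rw [if_pos h, Set.indicator_of_mem (Set.mem_Ico.2 ⟨ht.1, lt_min h ht.2⟩)]
    · rw [if_neg h, Set.indicator_of_notMem]
      intro hmem
      exact h (lt_of_lt_of_le hmem.2 (min_le_left _ _))
  rw [h1, MeasureTheory.setIntegral_indicator measurableSet_Ico, Set.Ico_inter_Ico]
  have e : max (0:ℝ) 0 = 0 := by simp
  have e2 : min τ (min m τ) = min m τ := by
    rcases le_total m τ with h | h <;> simp [min_eq_left, min_eq_right, h]
  rw [e, e2]
  exact integral_sin_sq_Ico (le_min hm hτ)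

lemma lower_integral {r : ℝ} (hr : 0 ≤ r) {n : ℕ} (hn : 2 ≤ n) {α : Set (ℝ × ℝ)}
    (hne : α.Nonempty) (hfin : α.Finite) (hcard : α.ncard ≤ n) :
    (2*Real.pi)⁻¹ * (r^2 * (Real.pi - (n/2) * Real.sin (2*Real.pi/n)))
      ≤ distortion2 (uniformCircle r) α := by
  have hπ := Real.pi_pos
  have hn0 : (0:ℝ) < n := by exact_mod_cast lt_of_lt_of_le (by norm_num) hn
  have hn2 : (2:ℝ) ≤ n := by exact_mod_cast hn
  set τ : ℝ := Real.pi / n with hτdef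
  have hτ0 : 0 ≤ τ := by positivity
  have hτ2 : τ ≤ Real.pi / 2 := by
    rw [hτdef, div_le_div_iff₀ hn0 (by norm_num)]
    nlinarith
  have hne' : hfin.toFinset.Nonempty := by simpa using hne
  set M : ℝ → ℝ := fun θ => hfin.toFinset.inf' hne' (fun a => cdist θ (angOf a)) with hMdef
  have hMc : Continuous M := continuous_iff_continuousAt.2 fun θ =>
    Filter.Tendsto.finset_inf'_nhds_apply _ (fun a _ => (continuous_cdist (angOf a)).continuousAt)
  set A := Set.Ico (0:ℝ) (2*Real.pi) with hA
  set B := Set.Ico (0:ℝ) τ with hB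
  have hM0 : ∀ θ ∈ A, 0 ≤ M θ := by
    intro θ hθ
    refine Finset.le_inf' _ _ (fun a _ => ?_)
    have hang := angOf_mem a
    refine cdist_nonneg ?_
    rw [abs_le]
    have h1 := hang.1; have h2 := hang.2; have h3 := hθ.1; have h4 := hθ.2
    constructor <;> linarith
  haveI hμθfin : IsFiniteMeasure (volume.restrict A) :=
    ⟨by rw [Measure.restrict_apply_univ, hA, Real.volume_Ico]; exact ENNReal.ofReal_lt_top⟩
  haveI hμtfin : IsFiniteMeasure (volume.restrict B) :=
    ⟨by rw [Measure.restrict_apply_univ, hB, Real.volume_Ico]; exact ENNReal.ofReal_lt_top⟩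
  set mfun : ℝ → ℝ := fun t => ((volume.restrict A) {θ | t < M θ}).toReal with hmfun
  have hmanti : Antitone mfun := by
    intro s t hst
    exact ENNReal.toReal_mono (measure_lt_top _ _).ne
      (measure_mono (fun θ h => lt_of_le_of_lt hst h))
  have hmbd : ∀ t, mfun t ≤ 2*Real.pi := by
    intro t
    rw [hmfun]
    have : (volume.restrict A) {θ | t < M θ} ≤ volume.restrict A Set.univ :=
      measure_mono (Set.subset_univ _)
    rw [Measure.restrict_apply_univ, hA, Real.volume_Ico, sub_zero] at this
    calc ((volume.restrict A) {θ | t < M θ}).toReal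
        ≤ (ENNReal.ofReal (2*Real.pi)).toReal :=
          ENNReal.toReal_mono ENNReal.ofReal_ne_top this
      _ = 2*Real.pi := ENNReal.toReal_ofReal (by positivity)
  have hmnn : ∀ t, 0 ≤ mfun t := fun t => ENNReal.toReal_nonneg
  -- lower bound for mfun
  have hmlb : ∀ t ∈ B, 2*Real.pi - 2*n*t ≤ mfun t := by
    intro t ht
    have ht0 : 0 ≤ t := ht.1
    have htπ : t ≤ Real.pi := le_trans ht.2.le (by linarith)
    have hsplit : (volume.restrict A) Set.univ
        ≤ (volume.restrict A) {θ | t < M θ} + (volume.restrict A) {θ | M θ ≤ t} := by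
      refine le_trans (measure_mono (fun x _ => ?_)) (measure_union_le _ _)
      rcases lt_or_ge t (M x) with h | h
      · exact Or.inl h
      · exact Or.inr h
    have hMle : (volume.restrict A) {θ | M θ ≤ t} ≤ (n : ENNReal) * ENNReal.ofReal (2*t) := by
      rw [Measure.restrict_apply (measurableSet_le hMc.measurable measurable_const), hA]
      exact measure_M_le hfin hne hcard ht0 htπ
    have huniv : (volume.restrict A) Set.univ = ENNReal.ofReal (2*Real.pi) := by
      rw [Measure.restrict_apply_univ, hA, Real.volume_Ico, sub_zero]
    have hcomb : ENNReal.ofReal (2*Real.pi)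
        ≤ (volume.restrict A) {θ | t < M θ} + (n : ENNReal) * ENNReal.ofReal (2*t) := by
      rw [← huniv]
      exact le_trans hsplit (add_le_add le_rfl hMle)
    have hfin1 : (volume.restrict A) {θ | t < M θ} ≠ ⊤ := (measure_lt_top _ _).ne
    have hfin2 : (n : ENNReal) * ENNReal.ofReal (2*t) ≠ ⊤ :=
      ENNReal.mul_ne_top (ENNReal.natCast_ne_top n) ENNReal.ofReal_ne_top
    have := ENNReal.toReal_mono (by exact ENNReal.add_ne_top.2 ⟨hfin1, hfin2⟩) hcomb
    rw [ENNReal.toReal_add hfin1 hfin2, ENNReal.toReal_ofReal (by positivity),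
      ENNReal.toReal_mul, ENNReal.toReal_natCast, ENNReal.toReal_ofReal (by linarith)] at this
    rw [hmfun]
    linarith
  -- Fubini setup
  set f2 : ℝ → ℝ → ℝ := fun t θ => if t < M θ then Real.sin (2*t) else 0 with hf2
  have hSmeas : MeasurableSet {p : ℝ × ℝ | p.1 < M p.2} :=
    measurableSet_lt measurable_fst (hMc.measurable.comp measurable_snd)
  have huncurry : Function.uncurry f2
      = Set.indicator {p : ℝ × ℝ | p.1 < M p.2} (fun p => Real.sin (2*p.1)) := by
    funext p
    simp only [Function.uncurry, hf2, Set.indicator_apply, Set.mem_setOf_eq]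
  have hf2int : MeasureTheory.Integrable (Function.uncurry f2)
      ((volume.restrict B).prod (volume.restrict A)) := by
    refine MeasureTheory.Integrable.mono' (MeasureTheory.integrable_const 1) ?_ ?_
    · rw [huncurry]
      exact ((Real.continuous_sin.comp (continuous_const.mul continuous_fst)).measurable.indicator
        hSmeas).aestronglyMeasurable
    · refine Filter.Eventually.of_forall (fun p => ?_)
      rw [huncurry]
      rcases Set.indicator_eq_zero_or_self {p : ℝ × ℝ | p.1 < M p.2}
        (fun p => Real.sin (2*p.1)) p with h | h
      · rw [h]; simp
      · rw [h]
        simp only [Real.norm_eq_abs]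
        exact Real.abs_sin_le_one _ |>.trans le_rfl
  -- chain of (in)equalities
  have e1 : ∫ t in B, Real.sin (2*t) * (2*Real.pi - 2*(n:ℝ)*t)
      ≤ ∫ t in B, Real.sin (2*t) * mfun t := by
    refine MeasureTheory.setIntegral_mono_on ?_ ?_ measurableSet_Ico ?_
    · exact ((by fun_prop : Continuous fun t : ℝ =>
        Real.sin (2*t) * (2*Real.pi - 2*(n:ℝ)*t)).integrableOn_Icc).mono_set
        Set.Ico_subset_Icc_self
    · refine MeasureTheory.Integrable.mono' (MeasureTheory.integrable_const (2*Real.pi)) ?_ ?_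
      · exact ((Real.continuous_sin.comp (continuous_const.mul continuous_id)).measurable.mul
          hmanti.measurable).aestronglyMeasurable
      · refine Filter.Eventually.of_forall (fun t => ?_)
        rw [Real.norm_eq_abs, abs_mul]
        calc |Real.sin (2*t)| * |mfun t| ≤ 1 * |mfun t| :=
              mul_le_mul_of_nonneg_right (Real.abs_sin_le_one _) (abs_nonneg _)
          _ = mfun t := by rw [one_mul, abs_of_nonneg (hmnn t)]
          _ ≤ 2*Real.pi := hmbd t
    · intro t ht
      have hsin : 0 ≤ Real.sin (2*t) := by
        refine Real.sin_nonneg_of_nonneg_of_le_pi (by linarith [ht.1]) ?_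
        have := ht.2
        rw [hB] at ht
        have h2 : t < τ := ht.2
        linarith
      exact mul_le_mul_of_nonneg_left (hmlb t ht) hsin
  have e2 : ∫ t in B, Real.sin (2*t) * mfun t
      = ∫ t in B, ∫ θ in A, f2 t θ := by
    refine MeasureTheory.setIntegral_congr_fun measurableSet_Ico (fun t _ => ?_)
    have hind : (fun θ => f2 t θ)
        = fun θ => Set.indicator {θ | t < M θ} (fun _ => Real.sin (2*t)) θ := by
      funext θ
      simp only [hf2, Set.indicator_apply, Set.mem_setOf_eq]
    rw [hind, MeasureTheory.integral_indicator_const _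
      (measurableSet_lt measurable_const hMc.measurable), smul_eq_mul, hmfun, mul_comm]
    rfl
  have e3 : ∫ t in B, ∫ θ in A, f2 t θ = ∫ θ in A, ∫ t in B, f2 t θ :=
    MeasureTheory.integral_integral_swap hf2int
  have e4 : ∫ θ in A, ∫ t in B, f2 t θ = ∫ θ in A, Real.sin (min (M θ) τ) ^ 2 := by
    refine MeasureTheory.setIntegral_congr_fun measurableSet_Ico (fun θ hθ => ?_)
    exact inner_eq (hM0 θ hθ) hτ0
  have e5 : ∫ θ in A, Real.sin (min (M θ) τ) ^ 2 ≤ ∫ θ in A, gg (M θ) := by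
    refine MeasureTheory.setIntegral_mono_on ?_ ?_ measurableSet_Ico ?_
    · exact (((Real.continuous_sin.comp (hMc.min continuous_const)).pow 2).integrableOn_Icc).mono_set
        Set.Ico_subset_Icc_self
    · exact ((continuous_gg.comp hMc).integrableOn_Icc).mono_set Set.Ico_subset_Icc_self
    · exact fun θ hθ => gg_ge_sin_sq_min (hM0 θ hθ) hτ0 hτ2
  have e6 : ∫ θ in A, r^2 * gg (M θ) ≤ ∫ θ in A, sInf (sqDist (circ r θ) '' α) := by
    refine MeasureTheory.setIntegral_mono_on ?_ ?_ measurableSet_Ico ?_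
    · exact (((continuous_const.mul (continuous_gg.comp hMc)) : Continuous fun θ => r^2 * gg (M θ)).integrableOn_Icc).mono_set
        Set.Ico_subset_Icc_self
    · exact (((continuous_sqDist_inf hfin hne).comp (continuous_circ r)).integrableOn_Icc).mono_set
        Set.Ico_subset_Icc_self
    · exact fun θ hθ => F_ge hr hfin hne hθ
  have e7 : ∫ θ in A, r^2 * gg (M θ) = r^2 * ∫ θ in A, gg (M θ) :=
    MeasureTheory.integral_const_mul _ _
  have e0 : ∫ t in B, Real.sin (2*t) * (2*Real.pi - 2*(n:ℝ)*t)
      = Real.pi - ((n:ℝ)/2) * Real.sin (2*Real.pi/n) := integral_weight n (by omega)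
  rw [distortion2_eq r hfin hne]
  have final : r^2 * (Real.pi - ((n:ℝ)/2) * Real.sin (2*Real.pi/n))
      ≤ ∫ θ in Set.Ico (0:ℝ) (2*Real.pi), sInf (sqDist (circ r θ) '' α) := by
    have c1 : Real.pi - ((n:ℝ)/2) * Real.sin (2*Real.pi/n) ≤ ∫ θ in A, gg (M θ) := by
      rw [← e0]
      calc ∫ t in B, Real.sin (2*t) * (2*Real.pi - 2*(n:ℝ)*t)
          ≤ ∫ t in B, Real.sin (2*t) * mfun t := e1
        _ = ∫ θ in A, Real.sin (min (M θ) τ) ^ 2 := by rw [e2, e3, e4]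
        _ ≤ ∫ θ in A, gg (M θ) := e5
    calc r^2 * (Real.pi - ((n:ℝ)/2) * Real.sin (2*Real.pi/n))
        ≤ r^2 * ∫ θ in A, gg (M θ) := mul_le_mul_of_nonneg_left c1 (by positivity)
      _ = ∫ θ in A, r^2 * gg (M θ) := e7.symm
      _ ≤ _ := e6
  exact mul_le_mul_of_nonneg_left final (by positivity)

lemma lower_bound (r : ℝ) (hr : 0 ≤ r) (n : ℕ) (hn : 2 ≤ n) :
    (2*Real.pi)⁻¹ * (r^2 * (Real.pi - ((n:ℝ)/2) * Real.sin (2*Real.pi/n)))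
      ≤ quantError2 (uniformCircle r) n := by
  refine le_csInf ⟨distortion2 (uniformCircle r) {((0:ℝ),(0:ℝ))}, {((0:ℝ),(0:ℝ))},
    Set.singleton_nonempty _, Set.finite_singleton _, by rw [Set.ncard_singleton]; omega, rfl⟩ ?_
  rintro v ⟨α, hne, hfin, hcard, rfl⟩
  exact lower_integral hr hn hne hfin hcard

lemma tendsto_q (c : ℝ) (hc : 0 < c) :
    Filter.Tendsto (fun n : ℕ => ((c/n) - Real.sin (c/n)) / (c/n)^3)
      Filter.atTop (nhds (1/6)) := by
  have hx : Filter.Tendsto (fun n : ℕ => c / n) Filter.atTop (nhds 0) :=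
    tendsto_const_div_atTop_nhds_zero_nat c
  have hlow : Filter.Tendsto (fun n : ℕ => 1/6 - 5*(c/n)/96) Filter.atTop (nhds (1/6)) := by
    have := (hx.const_mul (5:ℝ)).div_const (96:ℝ)
    have h2 := (tendsto_const_nhds (x := (1/6 : ℝ)) (f := Filter.atTop (α := ℕ))).sub this
    simpa using h2
  have hhigh : Filter.Tendsto (fun n : ℕ => 1/6 + 5*(c/n)/96) Filter.atTop (nhds (1/6)) := by
    have := (hx.const_mul (5:ℝ)).div_const (96:ℝ)
    have h2 := (tendsto_const_nhds (x := (1/6 : ℝ)) (f := Filter.atTop (α := ℕ))).add this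
    simpa using h2
  have hev : ∀ᶠ n : ℕ in Filter.atTop, 0 < c/(n:ℝ) ∧ c/(n:ℝ) ≤ 1 := by
    have h1 : ∀ᶠ n : ℕ in Filter.atTop, (c:ℝ) ≤ n := by
      obtain ⟨N, hN⟩ := exists_nat_ge c
      exact Filter.eventually_atTop.2 ⟨max N 1, fun m hm => le_trans hN
        (by exact_mod_cast le_trans (le_max_left N 1) hm)⟩
    have h2 : ∀ᶠ n : ℕ in Filter.atTop, 1 ≤ n := Filter.eventually_atTop.2 ⟨1, fun m hm => hm⟩
    filter_upwards [h1, h2] with m h1m h2m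
    have hm0 : (0:ℝ) < m := by exact_mod_cast h2m
    constructor
    · positivity
    · rw [div_le_one hm0]; exact h1m
  have key : ∀ x : ℝ, 0 < x → x ≤ 1 →
      1/6 - 5*x/96 ≤ (x - Real.sin x) / x^3 ∧ (x - Real.sin x) / x^3 ≤ 1/6 + 5*x/96 := by
    intro x hx0 hx1
    have hb := Real.sin_bound (x := x) (by rw [abs_of_pos hx0]; exact hx1)
    rw [abs_of_pos hx0] at hb
    rw [abs_le] at hb
    constructor
    · rw [le_div_iff₀ (by positivity)]
      nlinarith [hb.1, hb.2]
    · rw [div_le_iff₀ (by positivity)]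
      nlinarith [hb.1, hb.2]
  refine tendsto_of_tendsto_of_tendsto_of_le_of_le' hlow hhigh ?_ ?_
  · filter_upwards [hev] with m hm
    exact (key _ hm.1 hm.2).1
  · filter_upwards [hev] with m hm
    exact (key _ hm.1 hm.2).2

theorem stmt11' (r : ℝ) (hr : 0 < r) :
    Filter.Tendsto (fun n : ℕ => (n : ℝ) ^ 2 * quantError2 (uniformCircle r) n) Filter.atTop
      (nhds (Real.pi ^ 2 * r ^ 2 / 3)) := by
  have hπ := Real.pi_pos
  have hql := tendsto_q (2*Real.pi) (by positivity)
  have hqu := tendsto_q Real.pi hπ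
  have hLlim : Filter.Tendsto (fun n : ℕ =>
      (n:ℝ)^2 * ((2*Real.pi)⁻¹ * (r^2 * (Real.pi - ((n:ℝ)/2) * Real.sin (2*Real.pi/n)))))
      Filter.atTop (nhds (Real.pi^2 * r^2 / 3)) := by
    have h1 := hql.const_mul (2*Real.pi^2*r^2)
    have h2 : (2*Real.pi^2*r^2) * (1/6 : ℝ) = Real.pi^2 * r^2 / 3 := by ring
    rw [h2] at h1
    refine h1.congr' ?_
    filter_upwards [Filter.eventually_atTop.2 ⟨1, fun m hm => hm⟩] with m hm
    have hm0 : (0:ℝ) < m := by exact_mod_cast hm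
    have hmne : (m:ℝ) ≠ 0 := ne_of_gt hm0
    field_simp
  have hUlim : Filter.Tendsto (fun n : ℕ =>
      (n:ℝ)^2 * ((2*Real.pi)⁻¹ * (2*r^2*(2*Real.pi - 2*(n:ℝ)*Real.sin (Real.pi/n)))))
      Filter.atTop (nhds (Real.pi^2 * r^2 / 3)) := by
    have h1 := hqu.const_mul (2*Real.pi^2*r^2)
    have h2 : (2*Real.pi^2*r^2) * (1/6 : ℝ) = Real.pi^2 * r^2 / 3 := by ring
    rw [h2] at h1
    refine h1.congr' ?_
    filter_upwards [Filter.eventually_atTop.2 ⟨1, fun m hm => hm⟩] with m hm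
    have hm0 : (0:ℝ) < m := by exact_mod_cast hm
    have hmne : (m:ℝ) ≠ 0 := ne_of_gt hm0
    field_simp
  refine tendsto_of_tendsto_of_tendsto_of_le_of_le' hLlim hUlim ?_ ?_
  · filter_upwards [Filter.eventually_atTop.2 ⟨2, fun m hm => hm⟩] with m hm
    exact mul_le_mul_of_nonneg_left (lower_bound r hr.le m hm) (by positivity)
  · filter_upwards [Filter.eventually_atTop.2 ⟨1, fun m hm => hm⟩] with m hm
    exact mul_le_mul_of_nonneg_left (upper_bound r m hm) (by positivity)

/-- Theorem 3.8: the quantization coefficient for the uniform distribution on the circle of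
radius `r` exists as a finite positive number and equals `π²r²/3`. -/
theorem stmt11 (r : ℝ) (hr : 0 < r) :
    Tendsto (fun n : ℕ => (n : ℝ) ^ 2 * quantError2 (uniformCircle r) n) atTop
      (nhds (Real.pi ^ 2 * r ^ 2 / 3)) := by
  exact stmt11' r hr
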